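/- arXiv:1409.3653 — 2 statements merged into one kernel-verified Lean document; each statement's English description precedes it below -/
import Mathlib

section
/- If K ≥ 2 and the sample size satisfies n ≤ √K, then for every behavior policy π_D, reward bound R_max > 0 and variance bound vector σ², sup over target policies π of R_n*(π, π_D, R_max, σ²) ≥ (1 − 1/√2)^{√2} · R_max² / 4. In particular, the minimax risk over target policies is bounded below by a positive constant times R_max², independently of n and K. -/
open MeasureTheory ProbabilityTheory ENNReal Filter

noncomputable section

namespace OffPolicy

variable {K : ℕ}

/-- `π` is a probability mass function on the action set. -/
def IsPolicy (π : Fin K → ℝ) : Prop := (∀ a, 0 ≤ π a) ∧ ∑ a, π a = 1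

/-- A behavior policy: a pmf with everywhere positive probabilities. -/
def IsBehaviorPolicy (πD : Fin K → ℝ) : Prop := (∀ a, 0 < πD a) ∧ ∑ a, πD a = 1

/-- The joint distribution of a single pair `(A, R)` with `A ~ πD` and `R ~ Φ(·|A)`. -/
def jointMeasure (πD : Fin K → ℝ) (Φ : Fin K → ProbabilityMeasure ℝ) :
    Measure (Fin K × ℝ) :=
  ∑ a : Fin K, (πD a).toNNReal • ((Measure.dirac a).prod (Φ a : Measure ℝ))

instance jointMeasure_finite (πD : Fin K → ℝ) (Φ : Fin K → ProbabilityMeasure ℝ) :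
    IsFiniteMeasure (jointMeasure πD Φ) := by
  unfold jointMeasure
  infer_instance

/-- The distribution of the i.i.d. dataset `D^n = ((A_1,R_1),…,(A_n,R_n))`. -/
def dataMeasure (n : ℕ) (πD : Fin K → ℝ) (Φ : Fin K → ProbabilityMeasure ℝ) :
    Measure (Fin n → Fin K × ℝ) :=
  Measure.pi fun _ => jointMeasure πD Φ

/-- Mean reward `r_Φ(a)` of action `a`. -/
def envMean (Φ : Fin K → ProbabilityMeasure ℝ) (a : Fin K) : ℝ :=
  ∫ x, x ∂(Φ a : Measure ℝ)

/-- Reward variance `σ²_Φ(a)` of action `a`. -/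
def envVar (Φ : Fin K → ProbabilityMeasure ℝ) (a : Fin K) : ℝ :=
  ∫ x, (x - envMean Φ a) ^ 2 ∂(Φ a : Measure ℝ)

/-- The value `v^π_Φ = Σ_a π(a) r_Φ(a)` of the target policy. -/
def value (π : Fin K → ℝ) (Φ : Fin K → ProbabilityMeasure ℝ) : ℝ :=
  ∑ a, π a * envMean Φ a

/-- Mean squared error `E[(v̂(D^n) − v^π_Φ)²]` of an estimator. -/
def mse (n : ℕ) (π πD : Fin K → ℝ) (Φ : Fin K → ProbabilityMeasure ℝ)
    (est : (Fin n → Fin K × ℝ) → ℝ) : ℝ≥0∞ :=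
  ∫⁻ d, ENNReal.ofReal ((est d - value π Φ) ^ 2) ∂(dataMeasure n πD Φ)

/-- Environments with square-integrable rewards, means within `[0, Rmax]`,
and variances bounded by `σ2`. -/
def ValidEnv (Rmax : ℝ) (σ2 : Fin K → ℝ) (Φ : Fin K → ProbabilityMeasure ℝ) : Prop :=
  (∀ a, MemLp (fun x => x) 2 (Φ a : Measure ℝ)) ∧
  (∀ a, 0 ≤ envMean Φ a ∧ envMean Φ a ≤ Rmax) ∧
  (∀ a, envVar Φ a ≤ σ2 a)

/-- Minimax risk `R_n^*(π, πD, Rmax, σ²)`. -/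
def minimaxRisk (n : ℕ) (π πD : Fin K → ℝ) (Rmax : ℝ) (σ2 : Fin K → ℝ) : ℝ≥0∞ :=
  ⨅ (est : (Fin n → Fin K × ℝ) → ℝ) (_ : Measurable est),
    ⨆ (Φ : Fin K → ProbabilityMeasure ℝ) (_ : ValidEnv Rmax σ2 Φ), mse n π πD Φ est

/-- The likelihood ratio estimator. -/
def vLR (n : ℕ) (π πD : Fin K → ℝ) (d : Fin n → Fin K × ℝ) : ℝ :=
  (1 / (n : ℝ)) * ∑ i, (π (d i).1 / πD (d i).1) * (d i).2

/-- `n(a)`: the number of samples of action `a` in the dataset. -/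
def cnt (n : ℕ) (d : Fin n → Fin K × ℝ) (a : Fin K) : ℕ :=
  (Finset.univ.filter fun i => (d i).1 = a).card

/-- `r̂(a) = R(a)/n(a)` if `n(a) > 0`, and `0` otherwise (division by zero is zero). -/
def rhat (n : ℕ) (d : Fin n → Fin K × ℝ) (a : Fin K) : ℝ :=
  if 0 < cnt n d a then
    (∑ i ∈ Finset.univ.filter (fun i => (d i).1 = a), (d i).2) / (cnt n d a : ℝ)
  else 0

/-- The regression estimator. -/
def vReg (n : ℕ) (π : Fin K → ℝ) (d : Fin n → Fin K × ℝ) : ℝ :=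
  ∑ a, π a * rhat n d a


lemma sqrt2_lb : (1.4 : ℝ) ≤ Real.sqrt 2 := by
  rw [show (2:ℝ) = 1.4^2 + 0.04 by norm_num]
  nlinarith [Real.sq_sqrt (by norm_num : (2:ℝ) ≥ 0) , Real.sqrt_nonneg 2,
    Real.sqrt_le_sqrt (by norm_num : (1.4:ℝ)^2 ≤ 1.4^2 + 0.04)]

lemma analytic (K n : ℕ) (hK : 2 ≤ K) (hn : (n:ℝ) ≤ Real.sqrt K)
    (q : ℝ) (hq0 : 0 ≤ q) (hq : q ≤ 1/(K:ℝ)) :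
    (1 - 1/Real.sqrt 2) ^ (Real.sqrt 2 : ℝ) ≤ (1 - q)^n := by
  have hKR : (2:ℝ) ≤ (K:ℝ) := by exact_mod_cast hK
  have hs2 : Real.sqrt 2 ^ 2 = 2 := Real.sq_sqrt (by norm_num)
  have hs2pos : (0:ℝ) < Real.sqrt 2 := Real.sqrt_pos.2 (by norm_num)
  have hlb : (1.4:ℝ) ≤ Real.sqrt 2 := by
    rw [show (1.4:ℝ) = Real.sqrt (1.4^2) by rw [Real.sqrt_sq]; norm_num]
    exact Real.sqrt_le_sqrt (by norm_num)
  have hbase_pos : (0:ℝ) < 1 - 1/Real.sqrt 2 := by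
    rw [sub_pos, div_lt_one hs2pos]; linarith
  set b : ℝ := 1 - 1/(K:ℝ) with hb
  have hbpos : (0:ℝ) < b := by
    have : 1/(K:ℝ) ≤ 1/2 := by
      apply div_le_div_of_nonneg_left (by norm_num) (by norm_num) hKR
    simp only [hb]; linarith
  have h1q : b ≤ 1 - q := by simp only [hb]; linarith
  have step1 : b ^ n ≤ (1-q)^n := pow_le_pow_left₀ hbpos.le h1q n
  refine le_trans ?_ step1
  -- rewrite both sides via exp
  rw [Real.rpow_def_of_pos hbase_pos]
  have hbn : b ^ n = Real.exp ((n:ℝ) * Real.log b) := by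
    rw [Real.exp_nat_mul, Real.exp_log hbpos]
  rw [hbn]
  apply Real.exp_le_exp.2
  -- log(1-1/√2) ≤ -1
  have hlog1 : Real.log (1 - 1/Real.sqrt 2) ≤ -1 := by
    rw [Real.log_le_iff_le_exp hbase_pos]
    have he : Real.exp 1 ≤ 2 + Real.sqrt 2 := by
      have := Real.exp_one_lt_d9
      nlinarith
    have hpos : (0:ℝ) < 2 + Real.sqrt 2 := by linarith
    have : 1 - 1/Real.sqrt 2 = 1/(2 + Real.sqrt 2) := by
      field_simp
      nlinarith
    rw [this, Real.exp_neg, one_div]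
    exact inv_anti₀ (Real.exp_pos 1) he
  have hlhs : Real.log (1 - 1/Real.sqrt 2) * Real.sqrt 2 ≤ -Real.sqrt 2 := by
    nlinarith
  refine le_trans hlhs ?_
  -- -√2 ≤ n log b : since n log b ≥ √K log b ≥ -√K/(K-1) ≥ -√2
  have hlogb_nonpos : Real.log b ≤ 0 := by
    apply Real.log_nonpos hbpos.le
    simp only [hb]
    have : 0 ≤ 1/(K:ℝ) := by positivity
    linarith
  have h1 : Real.sqrt K * Real.log b ≤ (n:ℝ) * Real.log b :=
    mul_le_mul_of_nonpos_right hn hlogb_nonpos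
  refine le_trans ?_ h1
  have hKm1 : (0:ℝ) < (K:ℝ) - 1 := by linarith
  have hlogb_lb : -(1/((K:ℝ)-1)) ≤ Real.log b := by
    have h := Real.log_le_sub_one_of_pos (show (0:ℝ) < 1/b by positivity)
    rw [Real.log_div one_ne_zero hbpos.ne'] at h
    have hb_eq : 1/b = (K:ℝ)/((K:ℝ)-1) := by
      simp only [hb]; field_simp
    rw [hb_eq] at h
    have : (K:ℝ)/((K:ℝ)-1) - 1 = 1/((K:ℝ)-1) := by field_simp; ring
    rw [this] at h
    simp only [Real.log_one, zero_sub, neg_le] at h ⊢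
    linarith
  have hsK : Real.sqrt K * (1/((K:ℝ)-1)) ≤ Real.sqrt 2 := by
    have hKsq : Real.sqrt K ^ 2 = (K:ℝ) := Real.sq_sqrt (by positivity)
    have hsKge : Real.sqrt 2 ≤ Real.sqrt K := Real.sqrt_le_sqrt hKR
    rw [mul_one_div, div_le_iff₀ hKm1]
    nlinarith [Real.sqrt_nonneg K, hs2pos, mul_nonneg (sub_nonneg.2 hsKge)
      (show (0:ℝ) ≤ Real.sqrt 2 * Real.sqrt K + 1 by positivity)]
  calc -Real.sqrt 2 ≤ Real.sqrt K * (-(1/((K:ℝ)-1))) := by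
        rw [mul_neg, neg_le_neg_iff]
        · exact hsK
      _ ≤ Real.sqrt K * Real.log b := by
        apply mul_le_mul_of_nonneg_left hlogb_lb (Real.sqrt_nonneg K)

/-- Restriction of a finite product measure to a box is the product of restrictions. -/
lemma pi_restrict_box {ι : Type*} [Fintype ι] {α : ι → Type*} [∀ i, MeasurableSpace (α i)]
    (μ : ∀ i, Measure (α i)) [∀ i, IsFiniteMeasure (μ i)]
    (s : ∀ i, Set (α i)) (_hs : ∀ i, MeasurableSet (s i)) :
    Measure.pi (fun i => (μ i).restrict (s i)) =
      (Measure.pi μ).restrict (Set.pi Set.univ s) := by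
  refine Measure.pi_eq fun t ht => ?_
  rw [Measure.restrict_apply (MeasurableSet.univ_pi ht), ← Set.pi_inter_distrib,
    Measure.pi_pi]
  exact Finset.prod_congr rfl fun i _ => (Measure.restrict_apply (ht i)).symm

/-- Dirac environment with mean vector `c`. -/
def diracEnv (c : Fin K → ℝ) : Fin K → ProbabilityMeasure ℝ :=
  fun a => ⟨Measure.dirac (c a), inferInstance⟩

lemma envMean_diracEnv (c : Fin K → ℝ) (a : Fin K) : envMean (diracEnv c) a = c a := by
  simp [envMean, diracEnv, integral_dirac]

lemma envVar_diracEnv (c : Fin K → ℝ) (a : Fin K) : envVar (diracEnv c) a = 0 := by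
  simp [envVar, diracEnv, integral_dirac, envMean_diracEnv]

lemma validEnv_diracEnv {Rmax : ℝ} {σ2 : Fin K → ℝ} (hσ : ∀ a, 0 ≤ σ2 a)
    (c : Fin K → ℝ) (hc : ∀ a, 0 ≤ c a ∧ c a ≤ Rmax) :
    ValidEnv Rmax σ2 (diracEnv c) := by
  refine ⟨fun a => ?_, fun a => by rw [envMean_diracEnv]; exact hc a,
    fun a => by rw [envVar_diracEnv]; exact hσ a⟩
  exact (memLp_const (c a)).ae_eq (ae_eq_dirac (fun x : ℝ => x)).symm

lemma joint_apply_compl (πD : Fin K → ℝ) (hsum : ∑ a, πD a = 1) (hpos : ∀ a, 0 < πD a)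
    (Φ : Fin K → ProbabilityMeasure ℝ) (a' : Fin K) :
    jointMeasure πD Φ (({a'}ᶜ : Set (Fin K)) ×ˢ (Set.univ : Set ℝ)) =
      ENNReal.ofReal (1 - πD a') := by
  unfold jointMeasure
  rw [Measure.finset_sum_apply]
  have h1 : ∀ a : Fin K, ((πD a).toNNReal • ((Measure.dirac a).prod (Φ a : Measure ℝ)))
      (({a'}ᶜ : Set (Fin K)) ×ˢ (Set.univ : Set ℝ)) =
      if a = a' then 0 else ENNReal.ofReal (πD a) := by
    intro a
    rw [Measure.smul_apply, Measure.prod_prod, measure_univ, mul_one,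
      Measure.dirac_apply' _ (measurableSet_singleton a').compl]
    by_cases h : a = a'
    · simp [h, Set.indicator]
    · simp [Set.indicator, h, ENNReal.ofReal, ENNReal.smul_def]
  rw [Finset.sum_congr rfl fun a _ => h1 a]
  calc (∑ a, if a = a' then 0 else ENNReal.ofReal (πD a))
      = ∑ a ∈ Finset.univ.erase a', ENNReal.ofReal (πD a) := by
        rw [← Finset.sum_erase (Finset.univ)
          (f := fun a => if a = a' then 0 else ENNReal.ofReal (πD a)) (a := a') (by simp)]
        exact Finset.sum_congr rfl fun a ha => if_neg (Finset.ne_of_mem_erase ha)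
    _ = ENNReal.ofReal (∑ a ∈ Finset.univ.erase a', πD a) :=
        (ENNReal.ofReal_sum_of_nonneg (fun a _ => (hpos a).le)).symm
    _ = ENNReal.ofReal (1 - πD a') := by
        rw [Finset.sum_erase_eq_sub (Finset.mem_univ a'), hsum]

lemma joint_restrict_congr (πD : Fin K → ℝ) (Φ Ψ : Fin K → ProbabilityMeasure ℝ) (a' : Fin K)
    (h : ∀ a, a ≠ a' → Φ a = Ψ a) :
    (jointMeasure πD Φ).restrict (({a'}ᶜ : Set (Fin K)) ×ˢ (Set.univ : Set ℝ)) =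
      (jointMeasure πD Ψ).restrict (({a'}ᶜ : Set (Fin K)) ×ˢ (Set.univ : Set ℝ)) := by
  ext t ht
  rw [Measure.restrict_apply ht, Measure.restrict_apply ht]
  unfold jointMeasure
  rw [Measure.finset_sum_apply, Measure.finset_sum_apply]
  refine Finset.sum_congr rfl fun a _ => ?_
  by_cases ha : a = a'
  · subst ha
    rw [Measure.smul_apply, Measure.smul_apply]
    have h0 : ∀ (μ : Measure ℝ) [SFinite μ],
        (Measure.dirac a).prod μ (t ∩ (({a}ᶜ : Set (Fin K)) ×ˢ (Set.univ : Set ℝ))) = 0 := by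
      intro μ _
      apply measure_mono_null Set.inter_subset_right
      rw [Measure.prod_prod]
      simp [Measure.dirac_apply' _ (measurableSet_singleton a).compl, Set.indicator]
    rw [h0, h0]
  · rw [h a ha]

/-- Corollary: for `K ≥ 2` and sample size `n ≤ √K`, the minimax
risk, after taking a supremum over target policies, is at least
`(1 − 1/√2)^{√2} · R_max²/4`; a constant (independent of `n` and `K`) times `R_max²`. -/
theorem sup_minimaxRisk_small_sample {K : ℕ} (hK : 2 ≤ K)
    (n : ℕ) (hn : (n : ℝ) ≤ Real.sqrt K)
    (πD : Fin K → ℝ) (hπD : IsBehaviorPolicy πD)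
    (Rmax : ℝ) (hR : 0 < Rmax) (σ2 : Fin K → ℝ) (hσ : ∀ a, 0 ≤ σ2 a) :
    ENNReal.ofReal ((1 - 1 / Real.sqrt 2) ^ (Real.sqrt 2) * Rmax ^ 2 / 4) ≤
      ⨆ (π : Fin K → ℝ) (_ : IsPolicy π), minimaxRisk n π πD Rmax σ2 := by
  obtain ⟨hπD_pos, hπD_sum⟩ := hπD
  have hKR : (2:ℝ) ≤ (K:ℝ) := by exact_mod_cast hK
  have hKpos : 0 < K := by omega
  -- choose an action with small behavior probability
  obtain ⟨a', ha'⟩ : ∃ a : Fin K, πD a ≤ 1/(K:ℝ) := by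
    by_contra h
    push_neg at h
    have h2 : (1:ℝ) < ∑ a : Fin K, πD a := by
      calc (1:ℝ) = ∑ _a : Fin K, 1/(K:ℝ) := by
            rw [Finset.sum_const, Finset.card_univ, Fintype.card_fin, nsmul_eq_mul]
            field_simp
        _ < ∑ a, πD a :=
            Finset.sum_lt_sum_of_nonempty ⟨⟨0, hKpos⟩, Finset.mem_univ _⟩ fun a _ => h a
    rw [hπD_sum] at h2
    linarith
  have hq0 : 0 ≤ πD a' := (hπD_pos a').le
  have hq1 : 1 - πD a' ≥ 0 := by
    have : 1/(K:ℝ) ≤ 1 := by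
      rw [div_le_one (by linarith)]; linarith
    linarith
  -- the analytic bound
  have hanal := analytic K n hK hn (πD a') hq0 ha'
  -- the target policy
  set π : Fin K → ℝ := fun a => if a = a' then 1 else 0 with hπ
  have hπ_pol : IsPolicy π := by
    constructor
    · intro a; simp only [hπ]; split <;> norm_num
    · simp [hπ]
  refine le_iSup₂_of_le π hπ_pol ?_
  rw [minimaxRisk]
  refine le_iInf fun est => le_iInf fun hest => ?_
  -- the two environments
  set c0 : Fin K → ℝ := fun _ => 0 with hc0
  set c1 : Fin K → ℝ := fun a => if a = a' then Rmax else 0 with hc1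
  have valid0 : ValidEnv Rmax σ2 (diracEnv c0) :=
    validEnv_diracEnv hσ c0 fun a => ⟨le_refl 0, hR.le⟩
  have valid1 : ValidEnv Rmax σ2 (diracEnv c1) := by
    refine validEnv_diracEnv hσ c1 fun a => ?_
    simp only [hc1]
    split <;> constructor <;> first | rfl | linarith
  have hv0 : value π (diracEnv c0) = 0 := by
    simp [value, envMean_diracEnv, hc0]
  have hv1 : value π (diracEnv c1) = Rmax := by
    simp only [value, envMean_diracEnv, hπ, hc1, ite_mul, one_mul, zero_mul, mul_ite]
    rw [Finset.sum_congr rfl (g := fun a => if a = a' then Rmax else 0)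
      (fun a _ => by split <;> simp_all), Finset.sum_ite_eq' Finset.univ a']
    simp
  -- the common sub-probability measure
  set S : Set (Fin K × ℝ) := ({a'}ᶜ : Set (Fin K)) ×ˢ (Set.univ : Set ℝ) with hSdef
  have hSm : MeasurableSet S := (measurableSet_singleton a').compl.prod MeasurableSet.univ
  set ν : Measure (Fin n → Fin K × ℝ) :=
    Measure.pi (fun _ => (jointMeasure πD (diracEnv c0)).restrict S) with hν
  have hrestr : (jointMeasure πD (diracEnv c0)).restrict S =
      (jointMeasure πD (diracEnv c1)).restrict S := by
    apply joint_restrict_congr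
    intro a ha
    simp only [diracEnv, hc0, hc1, if_neg ha]; rfl
  have hν0 : ν ≤ dataMeasure n πD (diracEnv c0) := by
    rw [hν, pi_restrict_box _ _ fun _ => hSm]
    exact Measure.restrict_le_self
  have hν1 : ν ≤ dataMeasure n πD (diracEnv c1) := by
    rw [hν, funext fun _ : Fin n => hrestr, pi_restrict_box _ _ fun _ => hSm]
    exact Measure.restrict_le_self
  have hνuniv : ν Set.univ = ENNReal.ofReal ((1 - πD a')^n) := by
    rw [hν, Measure.pi_univ]
    simp only [Measure.restrict_apply_univ]
    rw [joint_apply_compl πD hπD_sum hπD_pos _ a', Finset.prod_const, Finset.card_univ,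
      Fintype.card_fin, ← ENNReal.ofReal_pow hq1]
  -- measurability of the integrand
  have hf0 : Measurable fun d => ENNReal.ofReal ((est d - value π (diracEnv c0))^2) :=
    ((hest.sub measurable_const).pow_const 2).ennreal_ofReal
  -- key inequality
  have key : ENNReal.ofReal ((1 - πD a')^n * (Rmax^2/2)) ≤
      mse n π πD (diracEnv c0) est + mse n π πD (diracEnv c1) est := by
    have hpt : ∀ d, ENNReal.ofReal (Rmax^2/2) ≤
        ENNReal.ofReal ((est d - value π (diracEnv c0))^2) +
        ENNReal.ofReal ((est d - value π (diracEnv c1))^2) := by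
      intro d
      rw [← ENNReal.ofReal_add (sq_nonneg _) (sq_nonneg _)]
      apply ENNReal.ofReal_le_ofReal
      rw [hv0, hv1]
      nlinarith [sq_nonneg (2 * est d - Rmax)]
    calc ENNReal.ofReal ((1 - πD a')^n * (Rmax^2/2))
        = ENNReal.ofReal (Rmax^2/2) * ν Set.univ := by
          rw [hνuniv, ← ENNReal.ofReal_mul (by positivity), mul_comm]
      _ = ∫⁻ _d, ENNReal.ofReal (Rmax^2/2) ∂ν := (lintegral_const _).symm
      _ ≤ ∫⁻ d, (ENNReal.ofReal ((est d - value π (diracEnv c0))^2) +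
            ENNReal.ofReal ((est d - value π (diracEnv c1))^2)) ∂ν :=
          lintegral_mono fun d => hpt d
      _ = (∫⁻ d, ENNReal.ofReal ((est d - value π (diracEnv c0))^2) ∂ν) +
          ∫⁻ d, ENNReal.ofReal ((est d - value π (diracEnv c1))^2) ∂ν :=
          lintegral_add_left hf0 _
      _ ≤ mse n π πD (diracEnv c0) est + mse n π πD (diracEnv c1) est :=
          add_le_add (lintegral_mono' hν0 le_rfl) (lintegral_mono' hν1 le_rfl)
  -- conclude
  set Ssup := ⨆ (Φ : Fin K → ProbabilityMeasure ℝ) (_ : ValidEnv Rmax σ2 Φ),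
    mse n π πD Φ est with hSsup
  have h0le : mse n π πD (diracEnv c0) est ≤ Ssup :=
    le_iSup₂ (f := fun Φ (_ : ValidEnv Rmax σ2 Φ) => mse n π πD Φ est) _ valid0
  have h1le : mse n π πD (diracEnv c1) est ≤ Ssup :=
    le_iSup₂ (f := fun Φ (_ : ValidEnv Rmax σ2 Φ) => mse n π πD Φ est) _ valid1
  have h2 : 2 * ENNReal.ofReal ((1 - 1 / Real.sqrt 2) ^ (Real.sqrt 2) * Rmax ^ 2 / 4) ≤
      2 * Ssup := by
    calc 2 * ENNReal.ofReal ((1 - 1 / Real.sqrt 2) ^ (Real.sqrt 2) * Rmax ^ 2 / 4)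
        = ENNReal.ofReal (2 * ((1 - 1 / Real.sqrt 2) ^ (Real.sqrt 2) * Rmax ^ 2 / 4)) := by
          rw [ENNReal.ofReal_mul (by norm_num : (0:ℝ) ≤ 2), ENNReal.ofReal_ofNat]
      _ ≤ ENNReal.ofReal ((1 - πD a')^n * (Rmax^2/2)) := by
          apply ENNReal.ofReal_le_ofReal
          have hR2 : (0:ℝ) ≤ Rmax^2/2 := by positivity
          calc 2 * ((1 - 1 / Real.sqrt 2) ^ (Real.sqrt 2) * Rmax ^ 2 / 4)
              = (1 - 1 / Real.sqrt 2) ^ (Real.sqrt 2 : ℝ) * (Rmax^2/2) := by ring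
            _ ≤ (1 - πD a')^n * (Rmax^2/2) :=
                mul_le_mul_of_nonneg_right hanal hR2
      _ ≤ mse n π πD (diracEnv c0) est + mse n π πD (diracEnv c1) est := key
      _ ≤ Ssup + Ssup := add_le_add h0le h1le
      _ = 2 * Ssup := (two_mul Ssup).symm
  exact (ENNReal.mul_le_mul_iff_right (by norm_num) (by norm_num)).mp h2

end OffPolicy
end
end

section
/- The regression estimator has expectation E[v̂_Reg] = Σ_a π(a) r_Φ(a) (1 − p_{a,n}), where p_{a,n} = (1 − π_D(a))^n; consequently its bias is E[v̂_Reg] − v^π_Φ = − Σ_a π(a) r_Φ(a) p_{a,n}, and the squared bias equals (Σ_a π(a) r_Φ(a) p_{a,n})². -/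
open MeasureTheory ProbabilityTheory ENNReal Filter

noncomputable section

namespace OffPolicy

variable {K : ℕ}

section AuxLemmas

variable {n : ℕ}

lemma map_eval (μ : Fin n → Measure ℝ) [∀ i, IsProbabilityMeasure (μ i)] (i : Fin n) :
    (Measure.pi μ).map (fun x => x i) = μ i := by
  ext s hs
  rw [Measure.map_apply (measurable_pi_apply i) hs, ← Set.univ_pi_update_univ,
    Measure.pi_pi]
  rw [Finset.prod_eq_single i]
  · simp
  · intro j _ hj; simp [Function.update_of_ne hj]
  · simp

lemma integrable_coord (μ : Fin n → Measure ℝ) [∀ i, IsProbabilityMeasure (μ i)] (i : Fin n)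
    (h : Integrable (fun x : ℝ => x) (μ i)) :
    Integrable (fun x : Fin n → ℝ => x i) (Measure.pi μ) := by
  rw [← map_eval μ i] at h
  exact ((integrable_map_measure h.aestronglyMeasurable
    (measurable_pi_apply i).aemeasurable).1 h)

lemma integral_coord (μ : Fin n → Measure ℝ) [∀ i, IsProbabilityMeasure (μ i)] (i : Fin n) :
    ∫ x : Fin n → ℝ, x i ∂(Measure.pi μ) = ∫ x, x ∂(μ i) := by
  rw [← map_eval μ i, integral_map (measurable_pi_apply i).aemeasurable]
  exact aestronglyMeasurable_id

lemma pi_mixture (c : Fin K → NNReal) (κ : Fin K → Measure (Fin K × ℝ))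
    [∀ a, IsFiniteMeasure (κ a)] :
    (Measure.pi (fun _ : Fin n => ∑ a, c a • κ a)) =
      ∑ f : Fin n → Fin K, (∏ i, c (f i)) • Measure.pi (fun i => κ (f i)) := by
  refine Measure.pi_eq (fun s hs => ?_)
  rw [Measure.finset_sum_apply]
  simp_rw [Measure.smul_apply, Measure.pi_pi, ENNReal.smul_def, smul_eq_mul,
    ENNReal.coe_finset_prod, ← Finset.prod_mul_distrib]
  rw [show (Finset.univ : Finset (Fin n → Fin K)) = Fintype.piFinset fun _ => Finset.univ from (Fintype.piFinset_univ).symm,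
    ← Finset.prod_univ_sum (fun _ => Finset.univ) (fun i a => (c a : ENNReal) * κ a (s i))]
  refine Finset.prod_congr rfl (fun i _ => ?_)
  rw [Measure.finset_sum_apply]
  refine Finset.sum_congr rfl (fun a _ => ?_)
  rw [Measure.smul_apply]
  rfl

lemma pi_dirac_prod (f : Fin n → Fin K) (Φ : Fin K → ProbabilityMeasure ℝ) :
    Measure.pi (fun i => (Measure.dirac (f i)).prod (Φ (f i) : Measure ℝ)) =
      Measure.map (fun r : Fin n → ℝ => fun i => (f i, r i))
        (Measure.pi fun i => (Φ (f i) : Measure ℝ)) := by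
  refine Measure.pi_eq (fun s hs => ?_)
  have hT : Measurable (fun r : Fin n → ℝ => fun i => (f i, r i)) :=
    measurable_pi_lambda _ (fun i => measurable_const.prodMk (measurable_pi_apply i))
  rw [Measure.map_apply hT (MeasurableSet.univ_pi hs)]
  have : (fun r : Fin n → ℝ => fun i => (f i, r i)) ⁻¹' Set.univ.pi s =
      Set.univ.pi (fun i => Prod.mk (f i) ⁻¹' s i) := by
    ext r; simp [Set.mem_pi]
  rw [this, Measure.pi_pi]
  refine Finset.prod_congr rfl (fun i _ => ?_)
  rw [Measure.dirac_prod, Measure.map_apply measurable_prodMk_left (hs i)]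

lemma dataMeasure_eq (πD : Fin K → ℝ) (Φ : Fin K → ProbabilityMeasure ℝ) :
    dataMeasure n πD Φ =
      ∑ f : Fin n → Fin K, ((∏ i, ((πD (f i)).toNNReal : ENNReal)) •
        Measure.map (fun r : Fin n → ℝ => fun i => (f i, r i))
          (Measure.pi fun i => (Φ (f i) : Measure ℝ))) := by
  unfold dataMeasure jointMeasure
  rw [pi_mixture (fun a => (πD a).toNNReal) (fun a => (Measure.dirac a).prod (Φ a : Measure ℝ))]
  refine Finset.sum_congr rfl (fun f _ => ?_)
  rw [pi_dirac_prod, ENNReal.smul_def, ENNReal.coe_finset_prod]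

lemma measurable_rhat (a : Fin K) : Measurable (fun d : Fin n → Fin K × ℝ => rhat n d a) := by
  have hset : ∀ i : Fin n, MeasurableSet {d : Fin n → Fin K × ℝ | (d i).1 = a} := by
    intro i
    exact ((measurable_pi_apply i).fst) (measurableSet_singleton a)
  have hnum : Measurable (fun d : Fin n → Fin K × ℝ =>
      ∑ i, if (d i).1 = a then (d i).2 else 0) :=
    Finset.measurable_sum _ fun i _ =>
      Measurable.ite (hset i) (measurable_pi_apply i).snd measurable_const
  have hden : Measurable (fun d : Fin n → Fin K × ℝ =>
      ∑ i, if (d i).1 = a then (1:ℝ) else 0) :=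
    Finset.measurable_sum _ fun i _ =>
      Measurable.ite (hset i) measurable_const measurable_const
  have hcond : MeasurableSet {d : Fin n → Fin K × ℝ | 0 < cnt n d a} := by
    have : {d : Fin n → Fin K × ℝ | 0 < cnt n d a} = ⋃ i, {d | (d i).1 = a} := by
      ext d
      simp [cnt, Finset.card_pos, Finset.filter_nonempty_iff]
    rw [this]
    exact MeasurableSet.iUnion fun i => hset i
  have heq : (fun d : Fin n → Fin K × ℝ => rhat n d a) = fun d =>
      if 0 < cnt n d a then
        (∑ i, if (d i).1 = a then (d i).2 else 0) / (∑ i, if (d i).1 = a then (1:ℝ) else 0)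
      else 0 := by
    funext d
    unfold rhat cnt
    rw [Finset.sum_filter, Finset.card_filter]
    push_cast
    rfl
  rw [heq]
  exact Measurable.ite hcond (hnum.div hden) measurable_const

lemma measurable_vReg (π : Fin K → ℝ) : Measurable (vReg n π) :=
  Finset.measurable_sum _ fun a _ => (measurable_rhat a).const_mul _

lemma vReg_comp (π : Fin K → ℝ) (f : Fin n → Fin K) (r : Fin n → ℝ) :
    vReg n π (fun i => (f i, r i)) =
      ∑ a, π a * (if 0 < (Finset.univ.filter fun i => f i = a).card
        then (∑ i ∈ Finset.univ.filter fun i => f i = a, r i) /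
          ((Finset.univ.filter fun i => f i = a).card : ℝ) else 0) := rfl

lemma integrable_vReg_comp (π : Fin K → ℝ) (Φ : Fin K → ProbabilityMeasure ℝ)
    (hΦ : ∀ a, Integrable (fun x => x) (Φ a : Measure ℝ)) (f : Fin n → Fin K) :
    Integrable (fun r : Fin n → ℝ => vReg n π (fun i => (f i, r i)))
      (Measure.pi fun i => (Φ (f i) : Measure ℝ)) := by
  simp_rw [vReg_comp]
  refine integrable_finset_sum _ (fun a _ => Integrable.const_mul ?_ _)
  by_cases h : 0 < (Finset.univ.filter fun i => f i = a).card
  · simp only [if_pos h]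
    exact (integrable_finset_sum _ fun i _ =>
      integrable_coord _ i (hΦ (f i))).div_const _
  · simp only [if_neg h]
    exact integrable_const 0

lemma integral_vReg_comp (π : Fin K → ℝ) (Φ : Fin K → ProbabilityMeasure ℝ)
    (hΦ : ∀ a, Integrable (fun x => x) (Φ a : Measure ℝ)) (f : Fin n → Fin K) :
    ∫ r, vReg n π (fun i => (f i, r i)) ∂(Measure.pi fun i => (Φ (f i) : Measure ℝ)) =
      ∑ a, π a * envMean Φ a * (if ∃ i, f i = a then 1 else 0) := by
  simp_rw [vReg_comp]
  rw [integral_finset_sum]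
  swap
  · intro a _
    refine Integrable.const_mul ?_ _
    by_cases h : 0 < (Finset.univ.filter fun i => f i = a).card
    · simp only [if_pos h]
      exact (integrable_finset_sum _ fun i _ =>
        integrable_coord _ i (hΦ (f i))).div_const _
    · simp only [if_neg h]
      exact integrable_const 0
  refine Finset.sum_congr rfl fun a _ => ?_
  rw [MeasureTheory.integral_const_mul]
  by_cases h : ∃ i, f i = a
  · have hne : (Finset.univ.filter fun i => f i = a).Nonempty := by
      obtain ⟨i, hi⟩ := h
      exact ⟨i, by simp [hi]⟩
    have hpos : 0 < (Finset.univ.filter fun i => f i = a).card := Finset.card_pos.2 hne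
    simp only [if_pos hpos, if_pos h]
    rw [integral_div, integral_finset_sum _
      (fun i _ => integrable_coord _ i (hΦ (f i)))]
    have hsum : ∑ i ∈ Finset.univ.filter (fun i => f i = a),
        ∫ x : Fin n → ℝ, x i ∂(Measure.pi fun j => (Φ (f j) : Measure ℝ)) =
        ∑ _i ∈ Finset.univ.filter (fun i => f i = a), envMean Φ a := by
      refine Finset.sum_congr rfl fun i hi => ?_
      rw [integral_coord]
      have : f i = a := (Finset.mem_filter.1 hi).2
      rw [this]
      rfl
    rw [hsum, Finset.sum_const, nsmul_eq_mul, mul_one]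
    have hc : ((Finset.univ.filter fun i => f i = a).card : ℝ) ≠ 0 := by
      exact_mod_cast hpos.ne'
    field_simp
  · have hemp : ¬ 0 < (Finset.univ.filter fun i => f i = a).card := by
      simp only [Finset.card_pos, Finset.filter_nonempty_iff]
      push_neg
      intro i _
      exact fun hia => h ⟨i, hia⟩
    simp only [if_neg hemp, if_neg h, integral_zero, mul_zero]

lemma sum_weights (πD : Fin K → ℝ) (hsum : ∑ a, πD a = 1) (a : Fin K) :
    ∑ f : Fin n → Fin K, (∏ i, πD (f i)) * (if ∃ i, f i = a then 1 else 0) =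
      1 - (1 - πD a) ^ n := by
  have key : ∀ f : Fin n → Fin K, (∏ i, πD (f i)) * (if ∃ i, f i = a then 1 else 0) =
      (∏ i, πD (f i)) - ∏ i, (πD (f i) * if f i = a then 0 else 1) := by
    intro f
    by_cases h : ∃ i, f i = a
    · rw [if_pos h, mul_one]
      obtain ⟨i, hi⟩ := h
      rw [show (∏ i, (πD (f i) * if f i = a then 0 else 1)) = 0 from
        Finset.prod_eq_zero (Finset.mem_univ i) (by rw [if_pos hi, mul_zero]), sub_zero]
    · rw [if_neg h, mul_zero]
      push_neg at h
      have h' : ∀ i, (πD (f i) * if f i = a then 0 else 1) = πD (f i) := fun i => by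
        rw [if_neg (h i), mul_one]
      rw [Finset.prod_congr rfl (fun i _ => h' i)]
      ring
  simp_rw [key]
  rw [Finset.sum_sub_distrib]
  have hpiu : (Finset.univ : Finset (Fin n → Fin K)) = Fintype.piFinset fun _ => Finset.univ :=
    (Fintype.piFinset_univ).symm
  have h1 : ∑ f : Fin n → Fin K, ∏ i, πD (f i) = 1 := by
    rw [hpiu, ← Finset.prod_univ_sum]
    simp [hsum]
  have h2 : ∑ f : Fin n → Fin K, ∏ i, (πD (f i) * if f i = a then 0 else 1) =
      (1 - πD a) ^ n := by
    rw [hpiu, ← Finset.prod_univ_sum (fun _ => Finset.univ)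
      (fun _ b => πD b * if b = a then 0 else 1)]
    have hb : ∑ b, (πD b * if b = a then 0 else 1) = 1 - πD a := by
      have : ∀ b, (πD b * if b = a then 0 else 1) = πD b - (if b = a then πD b else 0) := by
        intro b; by_cases hb : b = a <;> simp [hb]
      simp_rw [this]
      rw [Finset.sum_sub_distrib, hsum, Finset.sum_ite_eq' Finset.univ a πD,
        if_pos (Finset.mem_univ a)]
    rw [Finset.prod_congr rfl fun _ _ => hb, Finset.prod_const, Finset.card_univ,
      Fintype.card_fin]
  rw [h1, h2]

theorem part1 (n : ℕ) (π πD : Fin K → ℝ) (hpos : ∀ a, 0 < πD a) (hsum : ∑ a, πD a = 1)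
    (Φ : Fin K → ProbabilityMeasure ℝ)
    (hΦ : ∀ a, Integrable (fun x => x) (Φ a : Measure ℝ)) :
    (∫ d, vReg n π d ∂(dataMeasure n πD Φ)) =
        ∑ a, π a * envMean Φ a * (1 - (1 - πD a) ^ n) := by
  have hT : ∀ f : Fin n → Fin K, Measurable (fun r : Fin n → ℝ => fun i => (f i, r i)) :=
    fun f => measurable_pi_lambda _ (fun i => measurable_const.prodMk (measurable_pi_apply i))
  have hint : ∀ f ∈ (Finset.univ : Finset (Fin n → Fin K)), Integrable (vReg n π)
      ((∏ i, ((πD (f i)).toNNReal : ENNReal)) •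
        Measure.map (fun r : Fin n → ℝ => fun i => (f i, r i))
          (Measure.pi fun i => (Φ (f i) : Measure ℝ))) := by
    intro f _
    refine Integrable.smul_measure ?_ ?_
    · exact (integrable_map_measure (measurable_vReg π).aestronglyMeasurable
        (hT f).aemeasurable).2 (integrable_vReg_comp π Φ hΦ f)
    · rw [← ENNReal.coe_finset_prod]
      exact ENNReal.coe_ne_top
  rw [dataMeasure_eq, integral_finset_sum_measure hint]
  have hterm : ∀ f : Fin n → Fin K,
      (∫ d, vReg n π d ∂((∏ i, ((πD (f i)).toNNReal : ENNReal)) •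
        Measure.map (fun r : Fin n → ℝ => fun i => (f i, r i))
          (Measure.pi fun i => (Φ (f i) : Measure ℝ)))) =
      (∏ i, πD (f i)) * ∑ a, π a * envMean Φ a * (if ∃ i, f i = a then 1 else 0) := by
    intro f
    rw [integral_smul_measure, integral_map (hT f).aemeasurable
      (measurable_vReg π).aestronglyMeasurable]
    have hc : (∏ i, ((πD (f i)).toNNReal : ENNReal)).toReal = ∏ i, πD (f i) := by
      rw [ENNReal.toReal_prod]
      exact Finset.prod_congr rfl fun i _ => by
        rw [ENNReal.coe_toReal, Real.coe_toNNReal _ (hpos (f i)).le]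
    rw [hc, integral_vReg_comp π Φ hΦ f, smul_eq_mul]
  simp_rw [hterm, Finset.mul_sum]
  rw [Finset.sum_comm]
  refine Finset.sum_congr rfl fun a _ => ?_
  have : ∑ f : Fin n → Fin K, (∏ i, πD (f i)) * (π a * envMean Φ a *
      (if ∃ i, f i = a then 1 else 0)) =
      π a * envMean Φ a * ∑ f : Fin n → Fin K, (∏ i, πD (f i)) *
        (if ∃ i, f i = a then 1 else 0) := by
    rw [Finset.mul_sum]
    exact Finset.sum_congr rfl fun f _ => by ring
  rw [this, sum_weights πD hsum a]


end AuxLemmas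

/-- the expectation of the regression estimator is
`Σ_a π(a) r_Φ(a)(1 − p_{a,n})` with `p_{a,n} = (1 − π_D(a))^n`; hence its bias is
`−Σ_a π(a) r_Φ(a) p_{a,n}` and its squared bias is `(Σ_a π(a) r_Φ(a) p_{a,n})²`. -/
theorem vReg_expectation_and_bias {K : ℕ} (n : ℕ)
    (π πD : Fin K → ℝ) (hπ : IsPolicy π) (hπD : IsBehaviorPolicy πD)
    (Φ : Fin K → ProbabilityMeasure ℝ)
    (hΦ : ∀ a, Integrable (fun x => x) (Φ a : Measure ℝ)) :
    (∫ d, vReg n π d ∂(dataMeasure n πD Φ)) =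
        ∑ a, π a * envMean Φ a * (1 - (1 - πD a) ^ n) ∧
    (∫ d, vReg n π d ∂(dataMeasure n πD Φ)) - value π Φ =
        -∑ a, π a * envMean Φ a * (1 - πD a) ^ n ∧
    ((∫ d, vReg n π d ∂(dataMeasure n πD Φ)) - value π Φ) ^ 2 =
        (∑ a, π a * envMean Φ a * (1 - πD a) ^ n) ^ 2 := by
  obtain ⟨hpos, hsum⟩ := hπD
  have h1 := part1 n π πD hpos hsum Φ hΦ
  have h2 : (∫ d, vReg n π d ∂(dataMeasure n πD Φ)) - value π Φ =
      -∑ a, π a * envMean Φ a * (1 - πD a) ^ n := by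
    rw [h1]
    unfold value
    rw [← Finset.sum_sub_distrib, ← Finset.sum_neg_distrib]
    exact Finset.sum_congr rfl fun a _ => by ring
  exact ⟨h1, h2, by rw [h2]; ring⟩

end OffPolicy
end
end
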